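/- Under conditional independence of group membership given y=1 (both under the true distribution and conditioned on retention), for any subset I of the k groups, Pr[retained | x ∈ ∩_{i∈I} G_i, y=1] = β_0^{1−|I|} · ∏_{i∈I} β_i, where β_i = Pr[retained | x ∈ G_i, y=1] and β_0 = Pr[retained | y=1]. -/

import Mathlib

open MeasureTheory ProbabilityTheory Finset

/-- Product formula for the retention probability of positive examples on an
intersection of groups, under conditional independence of group membership given
y=1, both under the true distribution and conditioned on retention. -/
theorem stmt2 {Ω : Type*} [MeasurableSpace Ω] (μ : Measure Ω) [IsProbabilityMeasure μ]
    (k : ℕ) (G : Fin k → Set Ω) (Y R : Set Ω)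
    (hYm : MeasurableSet Y) (hRm : MeasurableSet R) (hGm : ∀ i, MeasurableSet (G i))
    (hYpos : μ Y ≠ 0) (hRYpos : μ (R ∩ Y) ≠ 0)
    (hGYpos : ∀ I : Finset (Fin k), μ ((⋂ i ∈ I, G i) ∩ Y) ≠ 0)
    (hcondindep : ∀ I : Finset (Fin k),
      μ[|Y] (⋂ i ∈ I, G i) = ∏ i ∈ I, μ[|Y] (G i))
    (hcondindepR : ∀ I : Finset (Fin k),
      μ[|R ∩ Y] (⋂ i ∈ I, G i) = ∏ i ∈ I, μ[|R ∩ Y] (G i)) :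
    ∀ I : Finset (Fin k),
      (μ[|(⋂ i ∈ I, G i) ∩ Y] R).toReal =
        (μ[|Y] R).toReal ^ ((1 : ℤ) - I.card) * ∏ i ∈ I, (μ[|G i ∩ Y] R).toReal := by
  intro I
  have hfin : ∀ s : Set Ω, μ s ≠ ⊤ := fun s => measure_ne_top μ s
  set A := ⋂ i ∈ I, G i with hAdef
  have hAm : MeasurableSet A := MeasurableSet.biInter (Set.to_countable _) (fun i _ => hGm i)
  have hRYm : MeasurableSet (R ∩ Y) := hRm.inter hYm
  set y := (μ Y).toReal with hydef
  set ry := (μ (R ∩ Y)).toReal with hrydef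
  have hy : 0 < y := ENNReal.toReal_pos hYpos (hfin _)
  have hry : 0 < ry := ENNReal.toReal_pos hRYpos (hfin _)
  have hApos : 0 < (μ (A ∩ Y)).toReal := ENNReal.toReal_pos (hGYpos I) (hfin _)
  have hgpos : ∀ i ∈ I, 0 < (μ (G i ∩ Y)).toReal := by
    intro i _
    have h := hGYpos {i}
    simp only [Finset.mem_singleton, Set.iInter_iInter_eq_left] at h
    exact ENNReal.toReal_pos h (hfin _)
  -- set rewrites
  have sY : ∀ s : Set Ω, Y ∩ s = s ∩ Y := fun s => Set.inter_comm _ _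
  have sA : (A ∩ Y) ∩ R = (R ∩ Y) ∩ A := by ext x; simp only [Set.mem_inter_iff]; tauto
  have sG : ∀ i, (G i ∩ Y) ∩ R = (R ∩ Y) ∩ G i := by
    intro i; ext x; simp only [Set.mem_inter_iff]; tauto
  -- real versions of independence hypotheses
  have h1 : y⁻¹ * (μ (A ∩ Y)).toReal = (y⁻¹)^I.card * ∏ i ∈ I, (μ (G i ∩ Y)).toReal := by
    have h := congrArg ENNReal.toReal (hcondindep I)
    simp only [cond_apply hYm, ENNReal.toReal_prod, ENNReal.toReal_mul, ENNReal.toReal_inv, ENNReal.toReal_pow,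
      Finset.prod_mul_distrib, Finset.prod_const, sY] at h
    exact h
  have h2 : ry⁻¹ * (μ ((R ∩ Y) ∩ A)).toReal
      = (ry⁻¹)^I.card * ∏ i ∈ I, (μ ((R ∩ Y) ∩ G i)).toReal := by
    have h := congrArg ENNReal.toReal (hcondindepR I)
    simp only [cond_apply hRYm, ENNReal.toReal_prod, ENNReal.toReal_mul, ENNReal.toReal_inv, ENNReal.toReal_pow,
      Finset.prod_mul_distrib, Finset.prod_const] at h
    exact h
  have ha : (μ (A ∩ Y)).toReal = (y⁻¹)^I.card * (∏ i ∈ I, (μ (G i ∩ Y)).toReal) * y := by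
    field_simp at h1 ⊢
    linarith [h1]
  have hb : (μ ((R ∩ Y) ∩ A)).toReal
      = (ry⁻¹)^I.card * (∏ i ∈ I, (μ ((R ∩ Y) ∩ G i)).toReal) * ry := by
    field_simp at h2 ⊢
    linarith [h2]
  -- unfold the goal
  rw [cond_apply ((hAm.inter hYm)) μ, cond_apply hYm μ]
  simp only [ENNReal.toReal_mul, ENNReal.toReal_inv]
  rw [sA, sY R]
  have hrw : ∀ i ∈ I, (μ[|G i ∩ Y] R).toReal
      = ((μ (G i ∩ Y)).toReal)⁻¹ * (μ ((R ∩ Y) ∩ G i)).toReal := by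
    intro i hi
    rw [cond_apply ((hGm i).inter hYm) μ, ENNReal.toReal_mul, ENNReal.toReal_inv, sG i]
  rw [Finset.prod_congr rfl hrw, Finset.prod_mul_distrib, Finset.prod_inv_distrib]
  have hzpow : (y⁻¹ * ry) ^ ((1:ℤ) - I.card)
      = (y⁻¹ * ry) * ((y⁻¹ * ry)^I.card)⁻¹ := by
    rw [zpow_sub₀ (by positivity), zpow_one, zpow_natCast, div_eq_mul_inv]
  rw [hzpow, ha, hb]
  have hP : (0:ℝ) < ∏ i ∈ I, (μ (G i ∩ Y)).toReal := Finset.prod_pos hgpos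
  field_simp
  rw [div_pow, div_pow, div_pow, one_pow]
  field_simp
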